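/- Let N ≥ 1 and let x, x' : ZMod N → ℂ satisfy x̂[k] ≠ 0 for all k ∈ ZMod N. If x̂'[i]·x̂'[j]·conj(x̂'[i+j]) = x̂[i]·x̂[j]·conj(x̂[i+j]) for all i, j ∈ ZMod N, then there exists k₀ ∈ ZMod N such that x'_j = x_{j+k₀} for all j ∈ ZMod N. That is, the degree-three unitary bispectrum invariants separate the ℤ_N-orbits (under cyclic shift) of vectors with nonvanishing discrete Fourier transform. -/

import Mathlib

open ZMod Complex

private lemma dft_shift_aux {N : ℕ} [NeZero N] (x : ZMod N → ℂ) (k₀ k : ZMod N) :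
    dft (fun j => x (j + k₀)) k = stdAddChar (k₀ * k) * dft x k := by
  rw [dft_apply, dft_apply, Finset.mul_sum]
  refine Fintype.sum_equiv (Equiv.addRight k₀) _ _ (fun j => ?_)
  simp only [Equiv.coe_addRight, smul_eq_mul]
  have h : k₀ * k + -((j + k₀) * k) = -(j * k) := by ring
  rw [← mul_assoc, ← AddChar.map_add_eq_mul, h]

/-- **The bispectrum separates cyclic-shift orbits of vectors with nonvanishing DFT.**
If `x, x' : ZMod N → ℂ`, the DFT of `x` is everywhere nonzero, and the bispectra
`x̂'[i]·x̂'[j]·conj(x̂'[i+j]) = x̂[i]·x̂[j]·conj(x̂[i+j])` agree for all `i, j`, then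
`x'` is a cyclic shift of `x`. -/
theorem bispectrum_separates_shift_orbits
    {N : ℕ} [NeZero N] (x x' : ZMod N → ℂ)
    (hnz : ∀ k : ZMod N, dft x k ≠ 0)
    (hb : ∀ i j : ZMod N,
      dft x' i * dft x' j * starRingEnd ℂ (dft x' (i + j)) =
        dft x i * dft x j * starRingEnd ℂ (dft x (i + j))) :
    ∃ k₀ : ZMod N, ∀ j : ZMod N, x' j = x (j + k₀) := by
  set a : ZMod N → ℂ := dft x with ha
  set a' : ZMod N → ℂ := dft x' with ha'
  -- Step A : a' 0 = a 0
  have h00 := hb 0 0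
  rw [add_zero, mul_assoc, mul_assoc, Complex.mul_conj, Complex.mul_conj] at h00
  have habs : ‖a' 0‖ = ‖a 0‖ := by
    have h3 : ‖a' 0‖ ^ 3 = ‖a 0‖ ^ 3 := by
      have := congrArg (‖·‖) h00
      simp only [norm_mul, Complex.norm_real, Real.norm_eq_abs,
        _root_.abs_of_nonneg (normSq_nonneg _), normSq_eq_norm_sq, _root_.abs_pow, _root_.abs_of_nonneg (norm_nonneg _)] at this
      linear_combination this
    exact (pow_left_strictMonoOn₀ (three_ne_zero)).injOn
      (Set.mem_Ici.2 (norm_nonneg _)) (Set.mem_Ici.2 (norm_nonneg _)) h3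
  have hns0 : (normSq (a' 0) : ℂ) = (normSq (a 0) : ℂ) := by
    rw [normSq_eq_norm_sq, normSq_eq_norm_sq, habs]
  have hA : a' 0 = a 0 := by
    rw [hns0] at h00
    exact mul_right_cancel₀ (by
      simpa using fun h => hnz 0 (normSq_eq_zero.mp h)) h00
  -- Step B : normSq (a' i) = normSq (a i)
  have hns : ∀ i : ZMod N, (normSq (a' i) : ℂ) = (normSq (a i) : ℂ) := by
    intro i
    have hbi0 := hb i 0
    rw [add_zero] at hbi0
    have goal' : (normSq (a' i) : ℂ) * a 0 = (normSq (a i) : ℂ) * a 0 := by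
      linear_combination hbi0 - (a' i * starRingEnd ℂ (a' i)) * hA -
        a 0 * Complex.mul_conj (a' i) + a 0 * Complex.mul_conj (a i)
    exact mul_right_cancel₀ (hnz 0) goal'
  have hnz' : ∀ i : ZMod N, a' i ≠ 0 := by
    intro i h
    apply hnz i
    have := hns i
    rw [h] at this
    simp only [map_zero, Complex.ofReal_zero] at this
    exact normSq_eq_zero.mp (by exact_mod_cast this.symm)
  -- Step C : multiplicativity
  have hmul : ∀ i j : ZMod N,
      a' i * a' j * a (i + j) = a i * a j * a' (i + j) := by
    intro i j
    have hcancel : a (i + j) * starRingEnd ℂ (a (i + j)) ≠ 0 := by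
      rw [Complex.mul_conj]
      simpa using fun h => hnz (i + j) (normSq_eq_zero.mp h)
    apply mul_right_cancel₀ hcancel
    have hsc : a' (i + j) * starRingEnd ℂ (a' (i + j)) =
        a (i + j) * starRingEnd ℂ (a (i + j)) := by
      rw [Complex.mul_conj, Complex.mul_conj]; exact hns (i + j)
    linear_combination (a (i + j) * a' (i + j)) * hb i j -
      (a' i * a' j * a (i + j)) * hsc
  -- Step D : a' (n) = c ^ n * a (n)
  set c : ℂ := a' 1 / a 1 with hc
  have hc1 : a' 1 = c * a 1 := by rw [hc, div_mul_cancel₀ _ (hnz 1)]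
  have hpow : ∀ n : ℕ, a' ((n : ZMod N)) = c ^ n * a ((n : ZMod N)) := by
    intro n
    induction n with
    | zero => simpa using hA
    | succ n ih =>
      have h := hmul ((n : ZMod N)) 1
      rw [ih, hc1] at h
      have hne : a ((n : ZMod N)) * a 1 ≠ 0 := mul_ne_zero (hnz _) (hnz _)
      push_cast
      apply mul_left_cancel₀ hne
      linear_combination -h
  -- c is an N-th root of unity
  have hcN : c ^ N = 1 := by
    have h := hpow N
    rw [ZMod.natCast_self, hA] at h
    have := mul_right_cancel₀ (hnz 0) (by linear_combination -h : c ^ N * a 0 = 1 * a 0)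
    exact this
  obtain ⟨m, hm, hζm⟩ := (Complex.isPrimitiveRoot_exp N (NeZero.ne N)).eq_pow_of_pow_eq_one hcN
  refine ⟨(m : ZMod N), ?_⟩
  have key : dft x' = dft (fun j => x (j + (m : ZMod N))) := by
    funext k
    rw [dft_shift_aux, ← ha, ← ha']
    have h1 : ((m : ZMod N)) * k = (m * k.val) • (1 : ZMod N) := by
      simp only [nsmul_eq_mul, Nat.cast_mul, mul_one, ZMod.natCast_val, ZMod.cast_id]
    have h2 : stdAddChar ((m : ZMod N) * k) = c ^ k.val := by
      rw [h1, AddChar.map_nsmul_eq_pow]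
      have hone : stdAddChar (1 : ZMod N) = Complex.exp (2 * Real.pi * Complex.I / N) := by
        have := ZMod.stdAddChar_coe (N := N) 1
        simpa using this
      rw [hone, pow_mul, hζm]
    have h3 := hpow k.val
    rw [ZMod.natCast_val, ZMod.cast_id] at h3
    rw [h3, h2]
  have := dft.injective key
  intro j
  exact congrFun this j
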